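/- For all n ≥ k ≥ 1, any composition β of n, and any ordered multiset partition μ of weight β with k blocks, maj(μ) + binom(k,2) = bmajMIL(μ). -/

import Mathlib

namespace OMP

/-- The letters of a block, listed in decreasing order. -/
def blockList {k : ℕ} (B : Fin k → Finset ℕ) (b : Fin k) : List ℕ :=
  ((B b).sort (· ≤ ·)).reverse

/-- The word σ(μ) (blocks written in decreasing order, concatenated), with each
letter tagged by the minimum of its block. -/
def tagged {k : ℕ} (B : Fin k → Finset ℕ) : List (ℕ × ℕ) :=
  (List.finRange k).flatMap fun b =>
    (blockList B b).map fun v => (v, ((B b).sort (· ≤ ·)).headD 0)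

/-- maj(μ) = Σ_{i : σ_i > σ_{i+1}} w_i, where w_i is the number of block minima
among the first i letters of σ(μ). -/
def majOMP {k : ℕ} (B : Fin k → Finset ℕ) : ℕ :=
  ∑ i ∈ Finset.range ((tagged B).length - 1),
    if ((tagged B).getD (i + 1) (0, 0)).1 < ((tagged B).getD i (0, 0)).1 then
      ((Finset.range (i + 1)).filter fun j =>
        ((tagged B).getD j (0, 0)).1 = ((tagged B).getD j (0, 0)).2).card
    else 0

/-- The largest letter appearing in μ. -/
def maxLetter {k : ℕ} (B : Fin k → Finset ℕ) : ℕ :=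
  Finset.univ.sup fun b => (B b).sup id

/-- The URG word ι(μ): for each letter j = 1, 2, ... in turn, list the (1-based)
indices of the blocks containing j, in increasing order. -/
def iota {k : ℕ} (B : Fin k → Finset ℕ) : List ℕ :=
  (List.range (maxLetter B)).flatMap fun j =>
    ((List.finRange k).filter fun b => (j + 1) ∈ B b).map fun b => (b : ℕ) + 1

/-- MIL(u) = Σᵢ (uᵢ − 1). -/
def MIL (u : List ℕ) : ℕ := (u.map fun x => x - 1).sum

/-- bMAJ(u) = Σᵢ i·χ(i ≻ i+1), where `i ≻ i+1` iff the leftmost occurrence of the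
letter i lies strictly to the right of the rightmost occurrence of the letter i+1. -/
def bMAJ (k : ℕ) (u : List ℕ) : ℕ :=
  ∑ i ∈ Finset.range k,
    if u.length - 1 - u.reverse.idxOf (i + 1) < u.idxOf i then i else 0

/-- bmajMIL(μ) = bMAJ(ι(μ)) + MIL(ι(μ)). -/
def bmajMIL {k : ℕ} (B : Fin k → Finset ℕ) : ℕ :=
  bMAJ k (iota B) + MIL (iota B)

end OMP


namespace OMPAux

open List Finset

/-! ### generic lemmas -/

lemma sum_range_add (f : ℕ → ℕ) (m n : ℕ) :
    ∑ i ∈ Finset.range (m + n), f i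
      = (∑ i ∈ Finset.range m, f i) + ∑ j ∈ Finset.range n, f (m + j) := by
  induction n with
  | zero => simp
  | succ n ih =>
    rw [show m + (n + 1) = (m + n) + 1 from rfl, Finset.sum_range_succ, ih,
      Finset.sum_range_succ, Nat.add_assoc]

lemma list_range_map_sum (f : ℕ → ℕ) (n : ℕ) :
    ((List.range n).map f).sum = ∑ i ∈ Finset.range n, f i := by
  induction n with
  | zero => rfl
  | succ n ih => rw [List.range_succ, Finset.sum_range_succ]; simp [ih]

lemma list_sum_filter (l : List ℕ) (p : ℕ → Bool) :
    (l.filter p).sum = (l.map fun i => if p i then i else 0).sum := by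
  induction l with
  | nil => rfl
  | cons a t ih => by_cases h : p a <;> simp [List.filter_cons, h, ih]

lemma pos_lemma {u L R : List ℕ} {v1 v2 : ℕ} (hu : u = L ++ R)
    (h2L : v2 ∈ L) (h1L : v1 ∉ L) (h2R : v2 ∉ R) :
    u.length - 1 - u.reverse.idxOf v2 < u.idxOf v1 := by
  subst hu
  have hi : (L ++ R).idxOf v1 = L.length + R.idxOf v1 :=
    List.idxOf_append_of_notMem h1L
  have h2Rr : v2 ∉ R.reverse := by simpa using h2R
  have hr : (L ++ R).reverse.idxOf v2 = R.reverse.length + L.reverse.idxOf v2 := by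
    rw [List.reverse_append]; exact List.idxOf_append_of_notMem h2Rr
  have h2Lr : v2 ∈ L.reverse := by simpa using h2L
  have hlt : L.reverse.idxOf v2 < L.reverse.length := List.idxOf_lt_length_iff.2 h2Lr
  simp only [List.length_append, List.length_reverse] at hi hr hlt ⊢
  omega

lemma neg_lemma {u L R : List ℕ} {v1 v2 : ℕ} (hu : u = L ++ R)
    (h1 : v1 ∈ L) (h2 : v2 ∈ R) :
    ¬ (u.length - 1 - u.reverse.idxOf v2 < u.idxOf v1) := by
  subst hu
  have hi : (L ++ R).idxOf v1 = L.idxOf v1 := List.idxOf_append_of_mem h1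
  have hiL : L.idxOf v1 < L.length := List.idxOf_lt_length_iff.2 h1
  have h2r : v2 ∈ R.reverse := by simpa using h2
  have hr : (L ++ R).reverse.idxOf v2 = R.reverse.idxOf v2 := by
    rw [List.reverse_append]; exact List.idxOf_append_of_mem h2r
  have hlt : R.reverse.idxOf v2 < R.reverse.length := List.idxOf_lt_length_iff.2 h2r
  simp only [List.length_append, List.length_reverse] at hi hr hlt ⊢
  omega

lemma split_pairwise {x y : ℕ} : ∀ {l : List ℕ}, l.Pairwise (· < ·) → x ∈ l → y ∈ l → x < y →
    ∃ L R, l = L ++ R ∧ x ∈ L ∧ y ∈ R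
  | [], _, hx, _, _ => absurd hx (by simp)
  | a :: t, hl, hx, hy, hxy => by
    rw [List.pairwise_cons] at hl
    rcases List.mem_cons.1 hy with rfl | hyt
    · rcases List.mem_cons.1 hx with rfl | hxt
      · omega
      · exact absurd (hl.1 x hxt) (by omega)
    · rcases List.mem_cons.1 hx with rfl | hxt
      · exact ⟨[x], t, by simp, by simp, hyt⟩
      · obtain ⟨L, R, h1, h2, h3⟩ := split_pairwise hl.2 hxt hyt hxy
        exact ⟨a :: L, R, by simp [h1], by simp [h2], h3⟩








def blk (s : Finset ℕ) : List (ℕ × ℕ) :=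
  ((s.sort (· ≤ ·)).reverse).map fun v => (v, (s.sort (· ≤ ·)).headD 0)

def mn (s : Finset ℕ) : ℕ := (s.sort (· ≤ ·)).headD 0
def mx (s : Finset ℕ) : ℕ := (s.sort (· ≤ ·)).getLastD 0

lemma headD_eq_getElem (l : List ℕ) (d : ℕ) (h : 0 < l.length) : l.headD d = l[0] := by
  cases l with
  | nil => simp at h
  | cons a t => rfl

lemma getLastD_eq_getElem (l : List ℕ) (d : ℕ) (h : 0 < l.length) :
    l.getLastD d = l[l.length - 1] := by
  cases l with
  | nil => simp at h
  | cons a t =>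
    rw [List.getLastD_eq_getLast?, List.getLast?_eq_getLast (by simp),
      List.getLast_eq_getElem]
    simp

lemma sort_length (s : Finset ℕ) : (s.sort (· ≤ ·)).length = s.card :=
  Finset.length_sort _

lemma mn_eq (s : Finset ℕ) (hs : s.Nonempty) : mn s = s.min' hs := by
  have h : 0 < (s.sort (· ≤ ·)).length := by
    rw [sort_length]; exact Finset.card_pos.2 hs
  rw [mn, headD_eq_getElem _ _ h, Finset.sorted_zero_eq_min']

lemma mx_eq (s : Finset ℕ) (hs : s.Nonempty) : mx s = s.max' hs := by
  have h : 0 < (s.sort (· ≤ ·)).length := by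
    rw [sort_length]; exact Finset.card_pos.2 hs
  rw [mx, getLastD_eq_getElem _ _ h, Finset.sorted_last_eq_max']

lemma blk_length (s : Finset ℕ) : (blk s).length = s.card := by
  simp [blk, sort_length]

lemma blk_getD (s : Finset ℕ) (p : ℕ) (hp : p < s.card) :
    (blk s).getD p (0, 0)
      = ((s.sort (· ≤ ·))[s.card - 1 - p]'(by rw [sort_length]; omega), mn s) := by
  have hp' : p < (blk s).length := by rw [blk_length]; exact hp
  rw [List.getD_eq_getElem _ _ hp']
  simp only [blk, List.getElem_map, List.getElem_reverse, mn]
  congr 1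
  · congr 1
    rw [sort_length]

lemma blk_snd (s : Finset ℕ) (p : ℕ) (hp : p < s.card) :
    ((blk s).getD p (0, 0)).2 = mn s := by rw [blk_getD s p hp]

lemma sort_zero_eq_mn (s : Finset ℕ) (h : 0 < (s.sort (· ≤ ·)).length) :
    (s.sort (· ≤ ·))[0] = mn s := by
  rw [mn, headD_eq_getElem _ _ h]

lemma blk_fst_last (s : Finset ℕ) (hs : s.Nonempty) :
    ((blk s).getD (s.card - 1) (0, 0)).1 = mn s := by
  have hc : 0 < s.card := Finset.card_pos.2 hs
  rw [blk_getD s _ (by omega)]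
  simp only
  rw [← List.getD_eq_getElem (d := 0), show s.card - 1 - (s.card - 1) = 0 from by omega,
    List.getD_eq_getElem _ _ (by rw [sort_length]; omega)]
  exact sort_zero_eq_mn s (by rw [sort_length]; omega)

lemma blk_fst_ne (s : Finset ℕ) (p : ℕ) (hp : p < s.card - 1) :
    ((blk s).getD p (0, 0)).1 ≠ mn s := by
  have hc : 0 < s.card := by omega
  rw [blk_getD s p (by omega)]
  simp only
  have hlt : (s.sort (· ≤ ·))[0]'(by rw [sort_length]; omega)
      < (s.sort (· ≤ ·))[s.card - 1 - p]'(by rw [sort_length]; omega) := by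
    apply List.pairwise_iff_getElem.1 (Finset.sortedLT_sort s).pairwise
    omega
  rw [sort_zero_eq_mn s (by rw [sort_length]; omega)] at hlt
  omega

lemma blk_desc (s : Finset ℕ) (p : ℕ) (hp : p + 1 < s.card) :
    ((blk s).getD (p + 1) (0, 0)).1 < ((blk s).getD p (0, 0)).1 := by
  rw [blk_getD s _ hp, blk_getD s p (by omega)]
  simp only
  apply List.pairwise_iff_getElem.1 (Finset.sortedLT_sort s).pairwise
  omega

lemma blk_fst_zero (s : Finset ℕ) (hs : s.Nonempty) :
    ((blk s).getD 0 (0, 0)).1 = mx s := by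
  have hc : 0 < s.card := Finset.card_pos.2 hs
  rw [blk_getD s 0 hc]
  simp only
  rw [mx, getLastD_eq_getElem _ _ (by rw [sort_length]; omega)]
  rw [← List.getD_eq_getElem (d := 0), ← List.getD_eq_getElem (d := 0)]
  congr 1
  rw [sort_length]
  omega



/-! ### tagged word machinery -/

def T (k : ℕ) (C : ℕ → Finset ℕ) : List (ℕ × ℕ) :=
  (List.range k).flatMap fun i => blk (C i)

def mins (l : List (ℕ × ℕ)) (t : ℕ) : ℕ :=
  ((Finset.range t).filter fun j => (l.getD j (0, 0)).1 = (l.getD j (0, 0)).2).card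

def maj' (l : List (ℕ × ℕ)) : ℕ :=
  ∑ i ∈ Finset.range (l.length - 1),
    if (l.getD (i + 1) (0, 0)).1 < (l.getD i (0, 0)).1 then mins l (i + 1) else 0

def E (k : ℕ) (C : ℕ → Finset ℕ) : ℕ :=
  ∑ b ∈ Finset.range (k - 1), (b + 1) * (if mx (C (b + 1)) < mn (C b) then 1 else 0)

lemma T_succ (k : ℕ) (C : ℕ → Finset ℕ) : T (k + 1) C = T k C ++ blk (C k) := by
  simp [T, List.range_succ]

lemma T_length (k : ℕ) (C : ℕ → Finset ℕ) :
    (T k C).length = ∑ i ∈ Finset.range k, (C i).card := by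
  rw [T, List.length_flatMap, ← list_range_map_sum (fun i => (C i).card) k]
  congr 1
  apply List.map_congr_left
  intro a _
  simp [Function.comp, blk_length]

lemma mins_append_le (A C : List (ℕ × ℕ)) (t : ℕ) (h : t ≤ A.length) :
    mins (A ++ C) t = mins A t := by
  unfold mins
  congr 1
  apply Finset.filter_congr
  intro j hj
  rw [Finset.mem_range] at hj
  rw [List.getD_append _ _ _ _ (by omega)]

lemma mins_append_blk (A : List (ℕ × ℕ)) (s : Finset ℕ) (hs : s.Nonempty) (t : ℕ)
    (ht : t ≤ s.card) :
    mins (A ++ blk s) (A.length + t) = mins A A.length + (if t = s.card then 1 else 0) := by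
  have hc : 0 < s.card := Finset.card_pos.2 hs
  unfold mins
  rw [Finset.card_filter, Finset.card_filter, sum_range_add]
  congr 1
  · apply Finset.sum_congr rfl
    intro j hj
    rw [Finset.mem_range] at hj
    rw [List.getD_append _ _ _ _ (by omega)]
  · have key : ∀ p ∈ Finset.range t,
        (if ((A ++ blk s).getD (A.length + p) (0, 0)).1
            = ((A ++ blk s).getD (A.length + p) (0, 0)).2 then 1 else 0)
        = if p = s.card - 1 then 1 else 0 := by
      intro p hp
      rw [Finset.mem_range] at hp
      have hgs : (A ++ blk s).getD (A.length + p) (0, 0) = (blk s).getD p (0, 0) := by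
        rw [List.getD_append_right _ _ _ _ (by omega)]
        congr 1
        omega
      rw [hgs, blk_snd s p (by omega)]
      by_cases hpc : p = s.card - 1
      · subst hpc
        rw [blk_fst_last s hs]
        simp
      · rw [if_neg hpc, if_neg (blk_fst_ne s p (by omega))]
    rw [Finset.sum_congr rfl key, Finset.sum_ite_eq' (Finset.range t) (s.card - 1) (fun _ => 1)]
    simp only [Finset.mem_range]
    split_ifs <;> omega

lemma maj'_append_blk (A : List (ℕ × ℕ)) (hA : A ≠ []) (s : Finset ℕ) (hs : s.Nonempty) :
    maj' (A ++ blk s) =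
      maj' A + (if mx s < (A.getD (A.length - 1) (0, 0)).1 then mins A A.length else 0)
        + mins A A.length * (s.card - 1) := by
  have hL : 1 ≤ A.length := List.length_pos_iff.2 hA
  have hm : 1 ≤ s.card := Finset.card_pos.2 hs
  have hlen : (A ++ blk s).length = A.length + s.card := by
    rw [List.length_append, blk_length]
  have hmaj : maj' A = ∑ i ∈ Finset.range (A.length - 1),
      (if (A.getD (i + 1) (0, 0)).1 < (A.getD i (0, 0)).1 then mins A (i + 1) else 0) := rfl
  unfold maj'
  rw [hlen, show A.length + s.card - 1 = ((A.length - 1) + 1) + (s.card - 1) from by omega,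
    sum_range_add, Finset.sum_range_succ, show (A.length - 1) + 1 = A.length from by omega]
  have e1 : ∀ i ∈ Finset.range (A.length - 1),
      (if ((A ++ blk s).getD (i + 1) (0, 0)).1 < ((A ++ blk s).getD i (0, 0)).1 then
        mins (A ++ blk s) (i + 1) else 0)
      = if (A.getD (i + 1) (0, 0)).1 < (A.getD i (0, 0)).1 then mins A (i + 1) else 0 := by
    intro i hi
    rw [Finset.mem_range] at hi
    rw [List.getD_append _ _ _ _ (by omega), List.getD_append _ _ _ _ (by omega),
      mins_append_le _ _ _ (by omega)]
  have e2 : (if ((A ++ blk s).getD A.length (0, 0)).1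
        < ((A ++ blk s).getD (A.length - 1) (0, 0)).1 then
          mins (A ++ blk s) A.length else 0)
      = if mx s < (A.getD (A.length - 1) (0, 0)).1 then mins A A.length else 0 := by
    have h1 : (A ++ blk s).getD A.length (0, 0) = (blk s).getD 0 (0, 0) := by
      rw [List.getD_append_right _ _ _ _ (by omega)]
      congr 1
      omega
    rw [h1, List.getD_append _ _ _ _ (by omega), mins_append_le _ _ _ (by omega)]
    congr 2
    rw [← blk_fst_zero s hs]
  have e3 : ∀ p ∈ Finset.range (s.card - 1),
      (if ((A ++ blk s).getD ((A.length + p) + 1) (0, 0)).1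
          < ((A ++ blk s).getD (A.length + p) (0, 0)).1 then
            mins (A ++ blk s) ((A.length + p) + 1) else 0)
      = mins A A.length := by
    intro p hp
    rw [Finset.mem_range] at hp
    have g1 : (A ++ blk s).getD (A.length + p) (0, 0) = (blk s).getD p (0, 0) := by
      rw [List.getD_append_right _ _ _ _ (by omega)]; congr 1; omega
    have g2 : (A ++ blk s).getD ((A.length + p) + 1) (0, 0) = (blk s).getD (p + 1) (0, 0) := by
      rw [List.getD_append_right _ _ _ _ (by omega)]; congr 1; omega
    rw [g1, g2, if_pos (blk_desc s p (by omega)),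
      show (A.length + p) + 1 = A.length + (p + 1) from by omega,
      mins_append_blk A s hs (p + 1) (by omega), if_neg (by omega), Nat.add_zero]
  rw [Finset.sum_congr rfl e1, e2, Finset.sum_congr rfl e3, Finset.sum_const,
    Finset.card_range, smul_eq_mul, ← hmaj]
  ring

lemma main_T (k : ℕ) (hk : 1 ≤ k) (C : ℕ → Finset ℕ) (hC : ∀ i, i < k → (C i).Nonempty) :
    maj' (T k C) = (∑ i ∈ Finset.range k, i * ((C i).card - 1)) + E k C
    ∧ mins (T k C) (T k C).length = k
    ∧ ((T k C).getD ((T k C).length - 1) (0, 0)) = (mn (C (k - 1)), mn (C (k - 1))) := by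
  induction k with
  | zero => omega
  | succ k ih =>
    rcases Nat.eq_or_lt_of_le hk with h1 | h2
    · -- k = 0
      have hk0 : k = 0 := by omega
      subst hk0
      have hs : (C 0).Nonempty := hC 0 (by omega)
      have hT : T 1 C = [] ++ blk (C 0) := by rw [T_succ]; rfl
      have hc : 0 < (C 0).card := Finset.card_pos.2 hs
      refine ⟨?_, ?_, ?_⟩
      · rw [hT, List.nil_append]
        have hz : maj' (blk (C 0)) = 0 := by
          unfold maj'
          apply Finset.sum_eq_zero
          intro i hi
          rw [Finset.mem_range, blk_length] at hi
          have hz2 : mins (blk (C 0)) (i + 1) = 0 := by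
            unfold mins
            rw [Finset.card_eq_zero, Finset.filter_eq_empty_iff]
            intro j hj
            rw [Finset.mem_range] at hj
            rw [blk_snd _ j (by omega)]
            exact blk_fst_ne _ j (by omega)
          rw [hz2, ite_self]
        rw [hz]
        simp [E]
      · rw [hT]
        rw [show ([] ++ blk (C 0) : List (ℕ × ℕ)).length
            = ([] : List (ℕ × ℕ)).length + (C 0).card from by simp [blk_length]]
        rw [mins_append_blk [] (C 0) hs _ (le_refl _)]
        simp [mins]
      · rw [hT, List.nil_append, blk_length]
        rw [Prod.ext_iff]
        exact ⟨blk_fst_last (C 0) hs, blk_snd (C 0) _ (by omega)⟩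
    · -- k ≥ 1
      have hk1 : 1 ≤ k := by omega
      have hC' : ∀ i, i < k → (C i).Nonempty := fun i hi => hC i (by omega)
      obtain ⟨ih1, ih2, ih3⟩ := ih hk1 hC'
      have hs : (C k).Nonempty := hC k (by omega)
      have hcm : 0 < (C k).card := Finset.card_pos.2 hs
      have hAne : T k C ≠ [] := by
        intro h
        rw [h] at ih2
        simp [mins] at ih2
        omega
      refine ⟨?_, ?_, ?_⟩
      · rw [T_succ, maj'_append_blk _ hAne _ hs, ih1, ih2, ih3]
        have hE : E (k + 1) C = E k C
            + k * (if mx (C k) < mn (C (k - 1)) then 1 else 0) := by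
          unfold E
          rw [show (k + 1) - 1 = (k - 1) + 1 from by omega, Finset.sum_range_succ,
            show (k - 1) + 1 = k from by omega]
        rw [Finset.sum_range_succ, hE]
        by_cases h : mx (C k) < mn (C (k - 1)) <;> simp [h] <;> ring
      · rw [T_succ]
        rw [show (T k C ++ blk (C k)).length = (T k C).length + (C k).card from by
          rw [List.length_append, blk_length]]
        rw [mins_append_blk _ _ hs _ (le_refl _), ih2]
        simp
      · rw [T_succ]
        rw [show (T k C ++ blk (C k)).length = (T k C).length + (C k).card from by
          rw [List.length_append, blk_length]]
        have hg : (T k C ++ blk (C k)).getD ((T k C).length + (C k).card - 1) (0, 0)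
            = (blk (C k)).getD ((C k).card - 1) (0, 0) := by
          rw [show (T k C).length + (C k).card - 1
              = (T k C).length + ((C k).card - 1) from by omega,
            List.getD_append_right _ _ _ _ (by omega)]
          congr 1
          omega
        rw [hg, show k + 1 - 1 = k from rfl, Prod.ext_iff]
        exact ⟨blk_fst_last _ hs, blk_snd _ _ (by omega)⟩



/-! ### URG word machinery -/

lemma sum_flatMap (l : List ℕ) (f : ℕ → List ℕ) :
    (l.flatMap f).sum = (l.map fun a => (f a).sum).sum := by
  induction l with
  | nil => rfl
  | cons a t ih => simp [List.flatMap_cons, ih]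

def seg (k : ℕ) (C : ℕ → Finset ℕ) (j : ℕ) : List ℕ :=
  ((List.range k).filter fun i => decide ((j + 1) ∈ C i)).map (· + 1)

def I (k m : ℕ) (C : ℕ → Finset ℕ) : List ℕ :=
  (List.range m).flatMap (seg k C)

lemma mem_flatMap_seg {k : ℕ} {C : ℕ → Finset ℕ} {v : ℕ} {l : List ℕ} :
    (v + 1) ∈ l.flatMap (seg k C) ↔ ∃ j ∈ l, v < k ∧ (j + 1) ∈ C v := by
  simp only [List.mem_flatMap, seg, List.mem_map, List.mem_filter, List.mem_range,
    decide_eq_true_eq]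
  constructor
  · rintro ⟨j, hj, a, ⟨⟨hak, hmem⟩, hav⟩⟩
    have : a = v := by omega
    subst this
    exact ⟨j, hj, hak, hmem⟩
  · rintro ⟨j, hj, hvk, hmem⟩
    exact ⟨j, hj, v, ⟨⟨hvk, hmem⟩, rfl⟩⟩

lemma MIL_I (k m : ℕ) (C : ℕ → Finset ℕ)
    (hbd : ∀ i, i < k → ∀ x ∈ C i, 1 ≤ x ∧ x ≤ m) :
    OMP.MIL (I k m C) = ∑ i ∈ Finset.range k, i * (C i).card := by
  unfold OMP.MIL I
  rw [List.map_flatMap, sum_flatMap]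
  have hseg : ∀ j : ℕ, (List.map (fun x => x - 1) (seg k C j)).sum
      = ∑ i ∈ Finset.range k, (if (j + 1) ∈ C i then i else 0) := by
    intro j
    have h1 : List.map (fun x => x - 1) (seg k C j)
        = (List.range k).filter fun i => decide ((j + 1) ∈ C i) := by
      rw [seg, List.map_map]
      have : ((fun x => x - 1) ∘ fun x : ℕ => x + 1) = id := by
        funext x; simp
      rw [this, List.map_id]
    rw [h1, list_sum_filter, list_range_map_sum]
    apply Finset.sum_congr rfl
    intro i _
    simp
  rw [show (List.map (fun a => (List.map (fun x => x - 1) (seg k C a)).sum) (List.range m))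
      = (List.range m).map
        (fun j => ∑ i ∈ Finset.range k, (if (j + 1) ∈ C i then i else 0)) from
    List.map_congr_left (fun j _ => hseg j)]
  rw [list_range_map_sum, Finset.sum_comm]
  apply Finset.sum_congr rfl
  intro i hi
  rw [Finset.mem_range] at hi
  rw [← Finset.sum_filter, Finset.sum_const, smul_eq_mul, Nat.mul_comm]
  congr 1
  apply Finset.card_bij (fun j _ => j + 1)
  · intro j hj
    rw [Finset.mem_filter] at hj
    exact hj.2
  · intro a ha b hb hab
    omega
  · intro x hx
    obtain ⟨hx1, hx2⟩ := hbd i hi x hx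
    exact ⟨x - 1, by rw [Finset.mem_filter, Finset.mem_range]
                     constructor
                     · omega
                     · rw [show x - 1 + 1 = x from by omega]; exact hx,
      by omega⟩


lemma bMAJ_cond (k m : ℕ) (C : ℕ → Finset ℕ) (b : ℕ) (hb : b + 1 < k)
    (h1 : (C b).Nonempty) (h2 : (C (b + 1)).Nonempty)
    (hbd : ∀ i, i < k → ∀ x ∈ C i, 1 ≤ x ∧ x ≤ m) :
    ((I k m C).length - 1 - (I k m C).reverse.idxOf (b + 2) < (I k m C).idxOf (b + 1))
      ↔ mx (C (b + 1)) < mn (C b) := by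
  rw [mx_eq _ h2, mn_eq _ h1]
  set Mn := (C b).min' h1 with hMndef
  set Mx := (C (b + 1)).max' h2 with hMxdef
  have hMnmem : Mn ∈ C b := (C b).min'_mem h1
  have hMxmem : Mx ∈ C (b + 1) := (C (b + 1)).max'_mem h2
  obtain ⟨hMn1, hMnm⟩ := hbd b (by omega) Mn hMnmem
  obtain ⟨hMx1, hMxm⟩ := hbd (b + 1) (by omega) Mx hMxmem
  by_cases hc : Mx < Mn
  · refine iff_of_true ?_ hc
    have hr : List.range m = List.range Mx ++ (List.range (m - Mx)).map (Mx + ·) := by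
      rw [← List.range_add]
      congr 1
      omega
    have hu : I k m C = (List.range Mx).flatMap (seg k C)
        ++ ((List.range (m - Mx)).map (Mx + ·)).flatMap (seg k C) := by
      rw [I, hr, List.flatMap_append]
    apply pos_lemma hu
    · -- b + 2 ∈ L
      show (b + 1) + 1 ∈ _
      refine mem_flatMap_seg.2 ⟨Mx - 1, ?_, by omega, ?_⟩
      · rw [List.mem_range]; omega
      · rw [show Mx - 1 + 1 = Mx from by omega]; exact hMxmem
    · -- b + 1 ∉ L
      intro h
      obtain ⟨j, hj, _, hmem⟩ := mem_flatMap_seg.1 (show b + 1 ∈ _ from h)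
      rw [List.mem_range] at hj
      have := (C b).min'_le _ hmem
      omega
    · -- b + 2 ∉ R
      intro h
      obtain ⟨j, hj, _, hmem⟩ := mem_flatMap_seg.1 (show (b + 1) + 1 ∈ _ from h)
      obtain ⟨s, _, rfl⟩ := List.mem_map.1 hj
      have := (C (b + 1)).le_max' _ hmem
      omega
  · refine iff_of_false ?_ hc
    have hMnMx : Mn ≤ Mx := by omega
    rcases Nat.lt_or_ge Mn Mx with hlt | hge
    · -- Mn < Mx : split between letters
      have hr : List.range m = List.range Mn ++ (List.range (m - Mn)).map (Mn + ·) := by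
        rw [← List.range_add]
        congr 1
        omega
      have hu : I k m C = (List.range Mn).flatMap (seg k C)
          ++ ((List.range (m - Mn)).map (Mn + ·)).flatMap (seg k C) := by
        rw [I, hr, List.flatMap_append]
      apply neg_lemma hu
      · show b + 1 ∈ _
        refine mem_flatMap_seg.2 ⟨Mn - 1, ?_, by omega, ?_⟩
        · rw [List.mem_range]; omega
        · rw [show Mn - 1 + 1 = Mn from by omega]; exact hMnmem
      · show (b + 1) + 1 ∈ _
        refine mem_flatMap_seg.2 ⟨Mx - 1, ?_, by omega, ?_⟩
        · refine List.mem_map.2 ⟨Mx - 1 - Mn, ?_, by omega⟩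
          rw [List.mem_range]
          omega
        · rw [show Mx - 1 + 1 = Mx from by omega]; exact hMxmem
    · -- Mn = Mx : split inside the segment of the letter Mn
      have heq : Mx = Mn := by omega
      set j0 := Mn - 1 with hj0def
      have hj0 : j0 + 1 = Mn := by omega
      set F := (List.range k).filter (fun i => decide ((j0 + 1) ∈ C i)) with hFdef
      have hpw : F.Pairwise (· < ·) := (List.pairwise_lt_range (n := k)).filter _
      have hbF : b ∈ F := by
        rw [hFdef, List.mem_filter, List.mem_range]
        refine ⟨by omega, ?_⟩
        rw [decide_eq_true_eq, hj0]
        exact hMnmem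
      have hb1F : b + 1 ∈ F := by
        rw [hFdef, List.mem_filter, List.mem_range]
        refine ⟨by omega, ?_⟩
        rw [decide_eq_true_eq, hj0, ← heq]
        exact hMxmem
      obtain ⟨P, Q, hPQ, hbP, hbQ⟩ := split_pairwise hpw hbF hb1F (by omega)
      have hsegsplit : seg k C j0 = P.map (· + 1) ++ Q.map (· + 1) := by
        rw [seg, ← List.map_append, ← hPQ]
      have hr : List.range m = (List.range j0 ++ [j0]) ++ (List.range (m - Mn)).map (Mn + ·) := by
        rw [← List.range_succ, Nat.succ_eq_add_one, hj0, ← List.range_add]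
        congr 1
        omega
      have hu : I k m C = ((List.range j0).flatMap (seg k C) ++ P.map (· + 1))
          ++ (Q.map (· + 1) ++ ((List.range (m - Mn)).map (Mn + ·)).flatMap (seg k C)) := by
        rw [I, hr, List.flatMap_append, List.flatMap_append]
        simp only [List.flatMap_cons, List.flatMap_nil, List.append_nil]
        rw [hsegsplit]
        simp [List.append_assoc]
      apply neg_lemma hu
      · exact List.mem_append_right _ (List.mem_map.2 ⟨b, hbP, rfl⟩)
      · show (b + 1) + 1 ∈ _
        exact List.mem_append_left _ (List.mem_map.2 ⟨b + 1, hbQ, rfl⟩)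

lemma bMAJ_I (k m : ℕ) (hk : 1 ≤ k) (C : ℕ → Finset ℕ)
    (hC : ∀ i, i < k → (C i).Nonempty)
    (hbd : ∀ i, i < k → ∀ x ∈ C i, 1 ≤ x ∧ x ≤ m) :
    OMP.bMAJ k (I k m C) = E k C := by
  unfold OMP.bMAJ E
  rw [show Finset.range k = Finset.range ((k - 1) + 1) from by congr 1; omega,
    Finset.sum_range_succ']
  rw [show (if (I k m C).length - 1 - (I k m C).reverse.idxOf (0 + 1) < (I k m C).idxOf 0
      then 0 else 0) = 0 from ite_self 0, Nat.add_zero]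
  apply Finset.sum_congr rfl
  intro b hb
  rw [Finset.mem_range] at hb
  have hcond := bMAJ_cond k m C b (by omega) (hC b (by omega)) (hC (b + 1) (by omega)) hbd
  by_cases h : mx (C (b + 1)) < mn (C b)
  · rw [if_pos h, mul_one, if_pos ?_]
    · exact hcond.2 h
  · rw [if_neg h, mul_zero, if_neg ?_]
    · exact fun hcc => h (hcond.1 hcc)


/-! ### bridges from `Fin k`-indexed data to `ℕ`-indexed data -/

lemma flatMap_congr {α β : Type*} {l : List α} {f g : α → List β} (h : ∀ a ∈ l, f a = g a) :
    l.flatMap f = l.flatMap g := by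
  induction l with
  | nil => rfl
  | cons a t ih =>
    rw [List.flatMap_cons, List.flatMap_cons, h a (by simp), ih (fun a ha => h a (by simp [ha]))]

def CC (k : ℕ) (B : Fin k → Finset ℕ) : ℕ → Finset ℕ := fun i => if h : i < k then B ⟨i, h⟩ else ∅

lemma CC_eq {k : ℕ} (B : Fin k → Finset ℕ) (b : Fin k) : CC k B ↑b = B b := by
  unfold CC
  rw [dif_pos b.isLt, Fin.eta]

lemma tagged_eq {k : ℕ} (B : Fin k → Finset ℕ) : OMP.tagged B = T k (CC k B) := by
  unfold OMP.tagged T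
  calc (List.finRange k).flatMap
        (fun b => (OMP.blockList B b).map fun v => (v, ((B b).sort (· ≤ ·)).headD 0))
      = (List.finRange k).flatMap (fun b : Fin k => blk (CC k B ↑b)) := by
        apply flatMap_congr
        intro b _
        rw [CC_eq]
        rfl
    _ = ((List.finRange k).map Fin.val).flatMap (fun i => blk (CC k B i)) :=
        (List.flatMap_map Fin.val (fun i => blk (CC k B i)) (List.finRange k)).symm
    _ = (List.range k).flatMap fun i => blk (CC k B i) := by rw [List.map_coe_finRange_eq_range]

lemma majOMP_eq {k : ℕ} (B : Fin k → Finset ℕ) : OMP.majOMP B = maj' (OMP.tagged B) := rfl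

lemma iota_eq {k : ℕ} (B : Fin k → Finset ℕ) :
    OMP.iota B = I k (OMP.maxLetter B) (CC k B) := by
  unfold OMP.iota I
  apply flatMap_congr
  intro j _
  show ((List.finRange k).filter fun b => decide ((j + 1) ∈ B b)).map (fun b => (b : ℕ) + 1)
      = seg k (CC k B) j
  have hpred : ∀ b ∈ List.finRange k, (decide ((j + 1) ∈ B b))
      = ((fun i => decide ((j + 1) ∈ CC k B i)) ∘ Fin.val) b := by
    intro b _
    simp [Function.comp, CC_eq]
  rw [List.filter_congr hpred, seg, ← List.map_coe_finRange_eq_range, List.filter_map, List.map_map]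
  simp only [bind_pure_comp, List.map_eq_map, List.map_map]

theorem stmt19aux (n k : ℕ) (hk : 1 ≤ k) (hkn : k ≤ n) (B : Fin k → Finset ℕ)
    (hne : ∀ b, (B b).Nonempty) (hpos : ∀ b, ∀ x ∈ B b, 1 ≤ x)
    (hsize : ∑ b, (B b).card = n) :
    OMP.majOMP B + k.choose 2 = OMP.bmajMIL B := by
  have hC : ∀ i, i < k → (CC k B i).Nonempty := by
    intro i hi
    unfold CC
    rw [dif_pos hi]
    exact hne _
  have hbd : ∀ i, i < k → ∀ x ∈ CC k B i, 1 ≤ x ∧ x ≤ OMP.maxLetter B := by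
    intro i hi x hx
    unfold CC at hx
    rw [dif_pos hi] at hx
    refine ⟨hpos _ x hx, ?_⟩
    calc x = id x := rfl
      _ ≤ (B ⟨i, hi⟩).sup id := Finset.le_sup hx
      _ ≤ OMP.maxLetter B := by
        unfold OMP.maxLetter
        exact Finset.le_sup (f := fun b => (B b).sup id) (Finset.mem_univ (⟨i, hi⟩ : Fin k))
  unfold OMP.bmajMIL
  rw [show OMP.majOMP B = maj' (T k (CC k B)) from by rw [majOMP_eq, tagged_eq]]
  rw [iota_eq B, bMAJ_I k (OMP.maxLetter B) hk (CC k B) hC hbd,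
    MIL_I k (OMP.maxLetter B) (CC k B) hbd, (main_T k hk (CC k B) hC).1]
  have hch : k.choose 2 = ∑ i ∈ Finset.range k, i := by
    rw [Nat.choose_two_right, ← Finset.sum_range_id_mul_two k]
    omega
  have hsum : ∑ i ∈ Finset.range k, i * ((CC k B i).card - 1) + ∑ i ∈ Finset.range k, i
      = ∑ i ∈ Finset.range k, i * (CC k B i).card := by
    rw [← Finset.sum_add_distrib]
    apply Finset.sum_congr rfl
    intro i hi
    rw [Finset.mem_range] at hi
    have h1 : 1 ≤ (CC k B i).card := Finset.card_pos.2 (hC i hi)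
    obtain ⟨d, hd⟩ : ∃ d, (CC k B i).card = d + 1 := ⟨(CC k B i).card - 1, by omega⟩
    rw [hd, Nat.add_sub_cancel]
    ring
  omega

end OMPAux

theorem stmt19 (n k : ℕ) (hk : 1 ≤ k) (hkn : k ≤ n) (B : Fin k → Finset ℕ)
    (hne : ∀ b, (B b).Nonempty) (hpos : ∀ b, ∀ x ∈ B b, 1 ≤ x)
    (hsize : ∑ b, (B b).card = n)
    (hcomp : ∀ j, 1 ≤ j → j ≤ OMP.maxLetter B → ∃ b, j ∈ B b) :
    OMP.majOMP B + k.choose 2 = OMP.bmajMIL B :=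
  OMPAux.stmt19aux n k hk hkn B hne hpos hsize
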